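/- Under the coupling ρ_j = 2LP h_j² with ‖h‖_∞ ≤ 1/(4L) and Σ h_k = T, one has Σ_{k=1}^n e^{L(T−t_k)} χ_k(δ) ≤ (1/√2) T e^{LT} √(LP ‖ρ‖_∞), where χ_k(δ) = ρ_k/2 if ρ_{k−1} < ρ_k and 0 otherwise, and t_k = Σ_{j≤k} h_j. -/

import Mathlib

/-- temporal nodes: t_k = h_1 + ... + h_k (0-based steps h 0,...,h (n-1)). -/
noncomputable def tnode (h : ℕ → ℝ) (k : ℕ) : ℝ := ∑ j ∈ Finset.range k, h j

theorem chi_sum_bound (L P T : ℝ) (hL : 0 < L) (hP : 0 < P) (hT : 0 < T)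
    (n : ℕ) (hn : 1 ≤ n) (h ρ : ℕ → ℝ)
    (hpos : ∀ j < n, 0 < h j) (hsum : ∑ j ∈ Finset.range n, h j = T)
    (hbd : ∀ j < n, h j ≤ 1/(4*L))
    (ρpos : ∀ k ≤ n, 0 < ρ k)
    (coupling : ∀ j < n, ρ (j+1) = 2*L*P*(h j)^2) :
    (∑ k ∈ Finset.range n,
        Real.exp (L*(T - tnode h (k+1))) * (if ρ k < ρ (k+1) then ρ (k+1) / 2 else 0))
      ≤ (1/Real.sqrt 2) * T * Real.exp (L*T) *
          Real.sqrt (L * P * ((Finset.range (n+1)).sup' ⟨0, by simp⟩ ρ)) := by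
  set M : ℝ := (Finset.range (n+1)).sup' ⟨0, by simp⟩ ρ with hMdef
  have hMle : ∀ k ≤ n, ρ k ≤ M := by
    intro k hk
    exact Finset.le_sup' ρ (Finset.mem_range.mpr (Nat.lt_succ_of_le hk))
  have hMpos : 0 < M := lt_of_lt_of_le (ρpos 0 (Nat.zero_le n)) (hMle 0 (Nat.zero_le n))
  have hsqrt2 : (0:ℝ) < Real.sqrt 2 := Real.sqrt_pos.mpr (by norm_num)
  set C : ℝ := 1/Real.sqrt 2 * Real.exp (L*T) * Real.sqrt (L*P*M) with hCdef
  have hCnn : 0 ≤ C := by positivity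
  have key : ∀ k ∈ Finset.range n,
      Real.exp (L*(T - tnode h (k+1))) * (if ρ k < ρ (k+1) then ρ (k+1) / 2 else 0)
        ≤ C * h k := by
    intro k hk
    rw [Finset.mem_range] at hk
    have hhk : 0 < h k := hpos k hk
    by_cases hc : ρ k < ρ (k+1)
    · rw [if_pos hc]
      have ht : 0 ≤ tnode h (k+1) := by
        apply Finset.sum_nonneg
        intro j hj
        rw [Finset.mem_range] at hj
        exact (hpos j (lt_of_lt_of_le hj hk)).le
      have hexp : Real.exp (L*(T - tnode h (k+1))) ≤ Real.exp (L*T) := by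
        apply Real.exp_le_exp.mpr
        nlinarith
      have hρ : ρ (k+1) = 2*L*P*(h k)^2 := coupling k hk
      have hρM : ρ (k+1) ≤ M := hMle (k+1) hk
      -- L*P*(h k) ≤ sqrt (L*P*M/2)
      have h1 : L*P*(h k) ≤ Real.sqrt (L*P*M/2) := by
        apply Real.le_sqrt' (by positivity) |>.mpr
        nlinarith [mul_le_mul_of_nonneg_left hρM (mul_pos hL hP).le]
      have hsq : Real.sqrt (L*P*M/2) = 1/Real.sqrt 2 * Real.sqrt (L*P*M) := by
        rw [Real.sqrt_div (by positivity) 2]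
        ring
      have h2 : ρ (k+1) / 2 = L*P*(h k) * (h k) := by rw [hρ]; ring
      calc Real.exp (L*(T - tnode h (k+1))) * (ρ (k+1)/2)
          ≤ Real.exp (L*T) * (ρ (k+1)/2) := by
            apply mul_le_mul_of_nonneg_right hexp
            nlinarith [ρpos (k+1) hk]
        _ = Real.exp (L*T) * (L*P*(h k)) * (h k) := by rw [h2]; ring
        _ ≤ Real.exp (L*T) * Real.sqrt (L*P*M/2) * (h k) := by
            apply mul_le_mul_of_nonneg_right _ hhk.le
            exact mul_le_mul_of_nonneg_left h1 (Real.exp_pos _).le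
        _ = C * h k := by rw [hsq, hCdef]; ring
    · rw [if_neg hc]
      simp only [mul_zero]
      positivity
  calc (∑ k ∈ Finset.range n,
        Real.exp (L*(T - tnode h (k+1))) * (if ρ k < ρ (k+1) then ρ (k+1) / 2 else 0))
      ≤ ∑ k ∈ Finset.range n, C * h k := Finset.sum_le_sum key
    _ = C * T := by rw [← Finset.mul_sum, hsum]
    _ = 1/Real.sqrt 2 * T * Real.exp (L*T) * Real.sqrt (L*P*M) := by rw [hCdef]; ring
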